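/- Suppose w = u₁ a₁ u₂ a₁ ⋯ a₁ u_{k−1} a₁ u_k is rich and square-free over an alphabet {a₁,…,a_n} with n, k ≥ 3, where Alph(u₁) = {a₂,…,a_n}, a₁ occurs in no u_i (and possibly u_k is empty). Then for 2 ≤ i ≤ k−1, each u_i is a nonempty palindrome of odd length, and writing u_i = v_i a_i reverse(v_i) with a_i its middle letter, one has Alph(u_{i+1}) ⊆ Alph(u_i) \ {a_i}. -/

import Mathlib

/-- A word is a palindrome if it equals its reversal. -/
def Palindromic {α : Type*} (w : List α) : Prop := w.reverse = w

/-- A finite word is rich if it has exactly |w|+1 distinct palindromic factors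
(including the empty word). -/
def Rich {α : Type*} (w : List α) : Prop :=
  {p : List α | p <:+: w ∧ Palindromic p}.ncard = w.length + 1

/-- A word is square-free if it has no factor of the form `u ++ u` with `u` nonempty. -/
def SqFree {α : Type*} (w : List α) : Prop :=
  ∀ u : List α, u ≠ [] → ¬ (u ++ u) <:+: w

namespace RichAux

variable {α : Type*}

lemma pal_nil : Palindromic ([] : List α) := rfl

lemma pal_single (c : α) : Palindromic [c] := rfl

lemma first_split {x : α} {l : List α} (h : x ∈ l) :
    ∃ p q, l = p ++ [x] ++ q ∧ x ∉ p := by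
  induction l with
  | nil => simp at h
  | cons b t ih =>
    by_cases hb : b = x
    · exact ⟨[], t, by simp [hb], by simp⟩
    · have hx : x ∈ t := by
        rcases List.mem_cons.1 h with h | h
        · exact absurd h.symm hb
        · exact h
      obtain ⟨p, q, hpq, hnp⟩ := ih hx
      exact ⟨b :: p, q, by simp [hpq], by
        simp only [List.mem_cons, not_or]
        exact ⟨fun h => hb h.symm, hnp⟩⟩

lemma last_split {x : α} {l : List α} (h : x ∈ l) :
    ∃ p q, l = p ++ [x] ++ q ∧ x ∉ q := by
  have h' : x ∈ l.reverse := List.mem_reverse.2 h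
  obtain ⟨p, q, hpq, hnp⟩ := first_split h'
  refine ⟨q.reverse, p.reverse, ?_, by simpa using hnp⟩
  have := congrArg List.reverse hpq
  simpa [List.reverse_append] using this

/-- uniqueness of splitting at the first occurrence of a letter -/
lemma fsplit {a : α} {A₁ B₁ A₂ B₂ : List α}
    (h : A₁ ++ [a] ++ B₁ = A₂ ++ [a] ++ B₂) (h₁ : a ∉ A₁) (h₂ : a ∉ A₂) :
    A₁ = A₂ ∧ B₁ = B₂ := by
  induction A₁ generalizing A₂ with
  | nil =>
    cases A₂ with
    | nil => simpa using h
    | cons b t =>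
      simp only [List.nil_append, List.cons_append, List.cons.injEq] at h
      exact absurd (List.mem_cons.2 (Or.inl h.1)) h₂
  | cons b₁ t₁ ih =>
    cases A₂ with
    | nil =>
      simp only [List.nil_append, List.cons_append, List.cons.injEq] at h
      exact absurd (List.mem_cons.2 (Or.inl h.1.symm)) h₁
    | cons b₂ t₂ =>
      simp only [List.cons_append, List.cons.injEq] at h
      have h₁' : a ∉ t₁ := fun hh => h₁ (List.mem_cons.2 (Or.inr hh))
      have h₂' : a ∉ t₂ := fun hh => h₂ (List.mem_cons.2 (Or.inr hh))
      obtain ⟨he, he'⟩ := ih (by simpa using h.2) h₁' h₂'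
      exact ⟨by rw [h.1, he], he'⟩

/-- uniqueness of splitting at the last occurrence of a letter -/
lemma lsplit {a : α} {A₁ B₁ A₂ B₂ : List α}
    (h : A₁ ++ [a] ++ B₁ = A₂ ++ [a] ++ B₂) (h₁ : a ∉ B₁) (h₂ : a ∉ B₂) :
    A₁ = A₂ ∧ B₁ = B₂ := by
  have h' : B₁.reverse ++ [a] ++ A₁.reverse = B₂.reverse ++ [a] ++ A₂.reverse := by
    have := congrArg List.reverse h
    simpa [List.reverse_append, List.append_assoc] using this
  obtain ⟨e1, e2⟩ := fsplit h' (by simpa using h₁) (by simpa using h₂)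
  constructor
  · have := congrArg List.reverse e2; simpa using this
  · have := congrArg List.reverse e1; simpa using this

lemma suffix_of_suffix_le {s₁ s₂ l : List α} (h₁ : s₁ <:+ l) (h₂ : s₂ <:+ l)
    (h : s₁.length ≤ s₂.length) : s₁ <:+ s₂ := by
  rw [← List.reverse_prefix] at h₁ h₂ ⊢
  exact List.prefix_of_prefix_length_le h₁ h₂ (by simpa using h)

lemma suffix_eq_of_len {s₁ s₂ l : List α} (h₁ : s₁ <:+ l) (h₂ : s₂ <:+ l)
    (h : s₁.length = s₂.length) : s₁ = s₂ := by
  have a1 := suffix_of_suffix_le h₁ h₂ h.le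
  exact List.IsSuffix.eq_of_length a1 h

/-- a palindrome with a unique distinguished letter: the parts around it are reverses -/
lemma pal_one_a {a : α} {P Q : List α} (hpal : Palindromic (P ++ [a] ++ Q))
    (hP : a ∉ P) (hQ : a ∉ Q) : P = Q.reverse := by
  have h : Q.reverse ++ [a] ++ P.reverse = P ++ [a] ++ Q := by
    have := hpal
    unfold Palindromic at this
    simpa [List.reverse_append, List.append_assoc] using this
  exact (fsplit h (by simpa using hQ) hP).1.symm

/-- an even-length nonempty palindrome contains a square of a single letter -/
lemma pal_even_square {p : List α} (hpal : Palindromic p) (hne : p ≠ [])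
    (hev : ¬ Odd p.length) : ∃ d : α, [d] ++ [d] <:+: p := by
  rw [Nat.not_odd_iff_even] at hev
  obtain ⟨m, hm⟩ := hev
  have hmpos : 0 < m := by
    rcases Nat.eq_zero_or_pos m with h | h
    · subst h
      have : p.length = 0 := by omega
      exact absurd (List.length_eq_zero_iff.1 this) hne
    · exact h
  have hsplit : p = p.take m ++ p.drop m := (List.take_append_drop m p).symm
  have hlt : (p.take m).length = m := by
    rw [List.length_take]; omega
  have hld : (p.drop m).length = m := by
    rw [List.length_drop]; omega
  have hrev : (p.drop m).reverse = p.take m := by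
    have h1 : (p.drop m).reverse ++ (p.take m).reverse = p.take m ++ p.drop m := by
      have := hpal; unfold Palindromic at this
      calc (p.drop m).reverse ++ (p.take m).reverse = p.reverse := by
            rw [← List.reverse_append, List.take_append_drop]
        _ = p := this
        _ = p.take m ++ p.drop m := hsplit
    exact (List.append_inj h1 (by simp [hld, hlt])).1
  obtain ⟨d', r, hd⟩ : ∃ d' r, p.drop m = d' :: r := by
    cases hdm : p.drop m with
    | nil => rw [hdm] at hld; simp at hld; omega
    | cons c r => exact ⟨c, r, rfl⟩
  refine ⟨d', ?_⟩
  have hp : p = (r.reverse ++ [d']) ++ (d' :: r) := by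
    have : (r.reverse ++ [d']) ++ (d' :: r) = p.take m ++ p.drop m := by
      rw [hd]
      congr 1
      rw [← hrev, hd]
      simp
    rw [this, List.take_append_drop]
  rw [hp]
  exact ⟨r.reverse, r, by simp [List.append_assoc]⟩

/-- an odd-length palindrome has a center -/
lemma pal_center {p : List α} (hpal : Palindromic p) {m : ℕ}
    (hlen : p.length = 2 * m + 1) :
    ∃ v c, p = v ++ [c] ++ v.reverse ∧ v.length = m := by
  have hmlt : m < p.length := by omega
  have hsplit : p = p.take m ++ p.drop m := (List.take_append_drop m p).symm
  have hlt : (p.take m).length = m := by rw [List.length_take]; omega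
  have hld : (p.drop m).length = m + 1 := by rw [List.length_drop]; omega
  obtain ⟨V, hV⟩ : ∃ V, p.take m = V := ⟨_, rfl⟩
  obtain ⟨D, hD⟩ : ∃ D, p.drop m = D := ⟨_, rfl⟩
  rw [hV] at hsplit hlt
  rw [hD] at hsplit hld
  obtain ⟨c, r, hcr⟩ : ∃ c r, D = c :: r := by
    cases D with
    | nil => simp at hld
    | cons c r => exact ⟨c, r, rfl⟩
  subst hcr
  have hlr : r.length = m := by simpa using hld
  have hp2 : p = V ++ [c] ++ r := by rw [hsplit]; simp
  have hrevp : r.reverse ++ [c] ++ V.reverse = V ++ [c] ++ r := by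
    have hh := hpal; unfold Palindromic at hh
    calc r.reverse ++ [c] ++ V.reverse = p.reverse := by
          rw [hp2]; simp [List.reverse_append, List.append_assoc]
      _ = p := hh
      _ = V ++ [c] ++ r := hp2
  have h1 : r.reverse = V := by
    have h2 : r.reverse ++ ([c] ++ V.reverse) = V ++ ([c] ++ r) := by
      simpa [List.append_assoc] using hrevp
    exact (List.append_inj h2 (by simp [hlr, hlt])).1
  refine ⟨V, c, ?_, hlt⟩
  have : V.reverse = r := by rw [← h1]; simp
  rw [hp2, this]

/-! ### Palindromic factor sets and richness -/

def PalSet (l : List α) : Set (List α) := {p | p <:+: l ∧ Palindromic p}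

lemma palset_finite (l : List α) : (PalSet l).Finite :=
  Set.Finite.subset l.sublists.finite_toSet
    (fun p hp => List.mem_sublists.2 hp.1.sublist)

lemma palset_nil : PalSet ([] : List α) = {[]} := by
  ext p
  simp only [PalSet, Set.mem_setOf_eq, Set.mem_singleton_iff]
  constructor
  · rintro ⟨h, -⟩
    simpa using List.sublist_nil.1 h.sublist
  · rintro rfl
    exact ⟨List.nil_infix, pal_nil⟩

lemma nil_mem_palset (l : List α) : [] ∈ PalSet l := ⟨List.nil_infix, pal_nil⟩

/-- if `l ++ [y] = A ++ p ++ B` with `B ≠ []` then `p` is an infix of `l` -/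
lemma infix_of_proper {l : List α} {y : α} {A p B : List α}
    (h : A ++ p ++ B = l ++ [y]) (hB : B ≠ []) : p <:+: l := by
  rcases List.eq_nil_or_concat B with h' | ⟨B', z, hz⟩
  · exact absurd h' hB
  rw [hz, List.concat_eq_append] at h
  have h2 : (A ++ p ++ B') ++ [z] = l ++ [y] := by
    rw [← h]; simp [List.append_assoc]
  have := List.append_inj h2 (by
    have := congrArg List.length h2
    simp at this ⊢
    omega)
  exact ⟨A, B', this.1⟩

/-- adding one letter adds at most the longest palindromic suffix -/
lemma palset_extend (q : List α) (x : α) :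
    ∃ s, s ≠ [] ∧ s <:+ (q ++ [x]) ∧ Palindromic s ∧
      PalSet (q ++ [x]) ⊆ insert s (PalSet q) := by
  classical
  set S : Set (List α) := {p | p <:+ (q ++ [x]) ∧ Palindromic p ∧ p ≠ []} with hS
  have hfin : S.Finite := Set.Finite.subset (palset_finite (q ++ [x]))
    (fun p hp => ⟨hp.1.isInfix, hp.2.1⟩)
  have hne : S.Nonempty := ⟨[x], ⟨q, rfl⟩, pal_single x, by simp⟩
  obtain ⟨s, hsS, hmax⟩ := hfin.exists_maximalFor List.length S hne
  have hlen : ∀ p ∈ S, p.length ≤ s.length := by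
    intro p hp
    by_contra hlt
    push_neg at hlt
    have := hmax hp hlt.le
    omega
  refine ⟨s, hsS.2.2, hsS.1, hsS.2.1, ?_⟩
  rintro p ⟨⟨A, B, hinf⟩, hpal⟩
  rcases eq_or_ne B [] with rfl | hB
  · -- p is a suffix
    rcases eq_or_ne p [] with rfl | hp
    · exact Set.mem_insert_iff.2 (Or.inr (nil_mem_palset q))
    · have hpS : p ∈ S := ⟨⟨A, by rw [← hinf]; simp⟩, hpal, hp⟩
      rcases eq_or_ne p s with rfl | hps
      · exact Set.mem_insert _ _
      · -- p is a proper suffix of s, hence a prefix, hence occurs earlier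
        have hsuf : p <:+ s := suffix_of_suffix_le
          ⟨A, by rw [← hinf]; simp⟩ hsS.1 (hlen p hpS)
        have hpre : p <+: s := by
          have h1 : p.reverse <:+ s.reverse := by
            rw [hpal, hsS.2.1]
            exact hsuf
          exact List.reverse_suffix.1 h1
        obtain ⟨g, hg⟩ := hpre
        have hgne : g ≠ [] := by
          rintro rfl
          exact hps (by simpa using hg)
        obtain ⟨h₀, hh₀⟩ := hsS.1
        have : h₀ ++ p ++ g = q ++ [x] := by rw [← hh₀, ← hg]; simp [List.append_assoc]
        exact Set.mem_insert_iff.2 (Or.inr ⟨infix_of_proper this hgne, hpal⟩)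
  · exact Set.mem_insert_iff.2 (Or.inr ⟨infix_of_proper hinf hB, hpal⟩)

lemma take_succ_eq {w : List α} {n : ℕ} (hn : n < w.length) :
    w.take (n+1) = w.take n ++ [w[n]] := by
  rw [List.take_succ, List.getElem?_eq_getElem hn]; rfl

lemma palset_mono {l₁ l₂ : List α} (h : l₁ <+: l₂) : PalSet l₁ ⊆ PalSet l₂ :=
  fun _ hp => ⟨hp.1.trans h.isInfix, hp.2⟩

lemma F_step (w : List α) (n : ℕ) :
    (PalSet (w.take (n+1))).ncard ≤ (PalSet (w.take n)).ncard + 1 := by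
  rcases lt_or_ge n w.length with hn | hn
  · obtain ⟨s, -, -, -, hsub⟩ := palset_extend (w.take n) (w[n])
    rw [← take_succ_eq hn] at hsub
    calc (PalSet (w.take (n+1))).ncard
        ≤ (insert s (PalSet (w.take n))).ncard :=
          Set.ncard_le_ncard hsub ((palset_finite _).insert s)
      _ ≤ (PalSet (w.take n)).ncard + 1 := Set.ncard_insert_le _ _
  · rw [List.take_of_length_le hn, List.take_of_length_le (by omega)]
    omega

lemma F_add (w : List α) (n m : ℕ) :
    (PalSet (w.take (n+m))).ncard ≤ (PalSet (w.take n)).ncard + m := by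
  induction m with
  | zero => simp
  | succ m ih =>
    have := F_step w (n+m)
    calc (PalSet (w.take (n+(m+1)))).ncard = (PalSet (w.take ((n+m)+1))).ncard := by
          ring_nf
      _ ≤ (PalSet (w.take (n+m))).ncard + 1 := F_step w (n+m)
      _ ≤ (PalSet (w.take n)).ncard + m + 1 := by omega
      _ = (PalSet (w.take n)).ncard + (m+1) := by omega

lemma rich_new_pal {w : List α} (hrich : Rich w) (n : ℕ) (hn : n < w.length) :
    ∃ p, p ∈ PalSet (w.take (n+1)) ∧ p ∉ PalSet (w.take n) := by
  by_contra hcon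
  push_neg at hcon
  have hmono : PalSet (w.take n) ⊆ PalSet (w.take (n+1)) := by
    apply palset_mono
    have h1 : w.take n = (w.take (n+1)).take n := by
      rw [List.take_take]
      congr 1
      omega
    rw [h1]
    exact List.take_prefix _ _
  have heq : (PalSet (w.take (n+1))).ncard = (PalSet (w.take n)).ncard := by
    have := Set.Subset.antisymm (fun p hp => hcon p hp) hmono
    rw [this]
  have hF0 : (PalSet (w.take 0)).ncard = 1 := by
    rw [List.take_zero, palset_nil, Set.ncard_singleton]
  have hFn : (PalSet (w.take n)).ncard ≤ n + 1 := by
    have h2 := F_add w 0 n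
    rw [Nat.zero_add] at h2
    omega
  have hFw : (PalSet (w.take w.length)).ncard = w.length + 1 := by
    rw [List.take_length]
    exact hrich
  have hsum : (PalSet (w.take w.length)).ncard
      ≤ (PalSet (w.take (n+1))).ncard + (w.length - (n+1)) := by
    have := F_add w (n+1) (w.length - (n+1))
    have he : (n+1) + (w.length - (n+1)) = w.length := by omega
    rwa [he] at this
  omega

/-- every nonempty prefix of a rich word has a unioccurrent palindromic suffix -/
lemma rich_uniocc {w : List α} (hrich : Rich w) {r : List α} (hr : r ≠ [])
    (hpre : r <+: w) :
    ∃ s, s ≠ [] ∧ s <:+ r ∧ Palindromic s ∧ ∀ A B, A ++ s ++ B = r → B = [] := by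
  obtain ⟨n, hn⟩ : ∃ n, r.length = n + 1 := by
    cases hl : r.length with
    | zero => exact absurd (List.length_eq_zero_iff.1 hl) hr
    | succ n => exact ⟨n, rfl⟩
  have hrt : r = w.take (n+1) := by
    rw [← hn]; exact List.prefix_iff_eq_take.1 hpre
  have hnlt : n < w.length := by
    have := hpre.length_le
    omega
  obtain ⟨p, hpmem, hpnot⟩ := rich_new_pal hrich n hnlt
  have hpne : p ≠ [] := by
    rintro rfl
    exact hpnot (nil_mem_palset _)
  have huni : ∀ A B, A ++ p ++ B = r → B = [] := by
    intro A B hAB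
    by_contra hB
    apply hpnot
    refine ⟨?_, hpmem.2⟩
    apply infix_of_proper (y := w[n]) (A := A) (B := B) _ hB
    rw [hAB, hrt, take_succ_eq hnlt]
  have hsuf : p <:+ r := by
    obtain ⟨A, B, hAB⟩ := hpmem.1
    rw [← hrt] at hAB
    have hB := huni A B hAB
    subst hB
    exact ⟨A, by simpa using hAB⟩
  exact ⟨p, hpne, hsuf, hpmem.2, huni⟩

/-- In a rich word, the factor between two consecutive occurrences of a letter
is a palindrome. -/
lemma consec_pal_aux {w : List α} (hrich : Rich w) :
    ∀ n (A m B : List α) (c : α), A.length = n →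
      w = A ++ [c] ++ m ++ [c] ++ B → c ∉ m → Palindromic m := by
  intro n
  induction n using Nat.strong_induction_on with
  | _ n ih =>
  intro A m B c hlen hw hcm
  have hrpre : (A ++ [c] ++ m ++ [c]) <+: w := ⟨B, by rw [hw]⟩
  have hrne : (A ++ [c] ++ m ++ [c]) ≠ [] := by simp
  obtain ⟨s, hsne, hssuf, hspal, huni⟩ := rich_uniocc hrich hrne hrpre
  obtain ⟨d, t, hdt⟩ := List.exists_cons_of_ne_nil hsne
  have hs2 : t.reverse ++ [d] = s := by
    rw [← hspal, hdt]; simp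
  have hdc : d = c := by
    have hds : [d] <:+ s := ⟨t.reverse, hs2⟩
    have h1 : [d] <:+ (A ++ [c] ++ m ++ [c]) := hds.trans hssuf
    have h2 : [c] <:+ (A ++ [c] ++ m ++ [c]) := ⟨A ++ [c] ++ m, by simp⟩
    have := suffix_eq_of_len h1 h2 rfl
    simpa using this
  subst hdc
  have hslen : s.length = t.length + 1 := by rw [hdt]; simp
  by_cases h1 : s.length = 1
  · -- s = [d], but d occurs twice: contradiction with unioccurrence
    have ht : t = [] := by
      rw [hslen] at h1
      exact List.length_eq_zero_iff.1 (by omega)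
    subst ht
    have := huni A (m ++ [d]) (by rw [hdt]; simp)
    simp at this
  have htne : t ≠ [] := by
    intro h
    rw [h] at hslen
    simp [hslen] at h1
  by_cases h2 : s.length ≤ m.length + 1
  · -- impossible: s would begin with d inside m
    exfalso
    have hmc : (m ++ [d]) <:+ (A ++ [d] ++ m ++ [d]) := ⟨A ++ [d], by simp⟩
    have hsm : s <:+ m ++ [d] := suffix_of_suffix_le hssuf hmc (by simp; omega)
    obtain ⟨e₂, he₂⟩ := hsm
    obtain ⟨t₁, y, hty⟩ : ∃ t₁ y, t = t₁ ++ [y] := by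
      rcases List.eq_nil_or_concat t with h | ⟨t₁, y, h⟩
      · exact absurd h htne
      · exact ⟨t₁, y, by simpa [List.concat_eq_append] using h⟩
    have heq : (e₂ ++ [d] ++ t₁) ++ [y] = m ++ [d] := by
      rw [← he₂, hdt, hty]; simp
    have := List.append_inj heq (by
      have hl := congrArg List.length heq
      simp at hl ⊢
      omega)
    exact hcm (by rw [← this.1]; simp)
  by_cases h3 : s.length = m.length + 2
  · -- s = [d] ++ m ++ [d], so m is a palindrome
    have hmm : ([d] ++ m ++ [d]) <:+ (A ++ [d] ++ m ++ [d]) := ⟨A, by simp [List.append_assoc]⟩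
    have hse : s = [d] ++ m ++ [d] := suffix_eq_of_len hssuf hmm (by simp; omega)
    have hrev : [d] ++ m.reverse ++ [d] = [d] ++ m ++ [d] := by
      calc [d] ++ m.reverse ++ [d] = s.reverse := by rw [hse]; simp
        _ = s := hspal
        _ = [d] ++ m ++ [d] := hse
    have : ([d] ++ m.reverse) ++ [d] = ([d] ++ m) ++ [d] := by
      simpa [List.append_assoc] using hrev
    have h4 := (List.append_inj this (by simp)).1
    have h5 : m.reverse = m := by
      have := congrArg (List.drop 1) h4
      simpa using this
    exact h5
  · -- s is longer: find an earlier pair of consecutive occurrences of d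
    obtain ⟨e, he⟩ := hssuf
    have hlene : e.length < A.length := by
      have := congrArg List.length he
      simp at this
      omega
    have heA : e <+: A := by
      apply List.prefix_of_prefix_length_le ⟨s, he⟩ ⟨[d] ++ m ++ [d], by simp [List.append_assoc]⟩
      omega
    obtain ⟨A₂, hA₂⟩ := heA
    have hA₂ne : A₂ ≠ [] := by
      rintro rfl
      simp at hA₂
      rw [hA₂] at hlene
      omega
    have hseq : s = A₂ ++ [d] ++ m ++ [d] := by
      have h8 : e ++ s = e ++ (A₂ ++ [d] ++ m ++ [d]) := by
        rw [he, ← hA₂]; simp [List.append_assoc]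
      simpa using h8
    have hsrev : s = [d] ++ m.reverse ++ [d] ++ A₂.reverse := by
      calc s = s.reverse := hspal.symm
        _ = [d] ++ m.reverse ++ [d] ++ A₂.reverse := by
          rw [hseq]; simp [List.reverse_append, List.append_assoc]
    have hwnew : w = e ++ [d] ++ m.reverse ++ [d] ++ (A₂.reverse ++ B) := by
      have h9 : w = e ++ s ++ B := by
        rw [hw, ← hA₂, hseq]; simp [List.append_assoc]
      rw [h9, hsrev]; simp [List.append_assoc]
    have hpalrev := ih e.length (by omega) e m.reverse (A₂.reverse ++ B) d rfl hwnew
      (by simpa using hcm)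
    unfold Palindromic at hpalrev ⊢
    rw [← hpalrev]
    simp

lemma consec_pal {w A m B : List α} {c : α} (hrich : Rich w)
    (hw : w = A ++ [c] ++ m ++ [c] ++ B) (hcm : c ∉ m) : Palindromic m :=
  consec_pal_aux hrich A.length A m B c rfl hw hcm

/-! ### Block structure of intercalated words -/

lemma icat_singleton (s x : List α) : List.intercalate s [x] = x := by
  simp [List.intercalate]

lemma icat_cons (s x : List α) {L : List (List α)} (h : L ≠ []) :
    List.intercalate s (x :: L) = x ++ s ++ List.intercalate s L := by
  obtain ⟨y, L', rfl⟩ := List.exists_cons_of_ne_nil h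
  simp [List.intercalate, List.intersperse]

lemma icat_append (s : List α) {L₁ L₂ : List (List α)} (h₁ : L₁ ≠ []) (h₂ : L₂ ≠ []) :
    List.intercalate s (L₁ ++ L₂) = List.intercalate s L₁ ++ s ++ List.intercalate s L₂ := by
  induction L₁ with
  | nil => exact absurd rfl h₁
  | cons x L ih =>
    rcases eq_or_ne L [] with rfl | hL
    · rw [icat_singleton]
      simpa using icat_cons s x h₂
    · rw [List.cons_append, icat_cons s x (by simp [hL]), icat_cons s x hL, ih hL]
      simp [List.append_assoc]

section Blocks

variable {a : α} {u : ℕ → List α} {k : ℕ} {w : List α}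

/-- prefix consisting of the first `i` blocks -/
def pre (a : α) (u : ℕ → List α) (i : ℕ) : List α :=
  List.intercalate [a] ((List.range i).map u)

lemma pre_one : pre a u 1 = u 0 := by
  have h : (List.range 1).map u = [u 0] := by
    have : List.range 1 = [0] := by decide
    rw [this, List.map_cons, List.map_nil]
  rw [pre, h, icat_singleton]

lemma pre_succ {i : ℕ} (hi : 1 ≤ i) : pre a u (i+1) = pre a u i ++ [a] ++ u i := by
  have h1 : List.range (i+1) = List.range i ++ [i] := List.range_succ
  rw [pre, h1, List.map_append]
  rw [icat_append [a] (by simp; omega) (by simp)]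
  simp [pre, icat_singleton]

/-- the suffix consisting of blocks from `j` on -/
def suf (a : α) (u : ℕ → List α) (k j : ℕ) : List α :=
  List.intercalate [a] ((List.range' j (k-j)).map u)

lemma suf_step {j : ℕ} (h : j + 2 ≤ k) :
    suf a u k j = u j ++ [a] ++ suf a u k (j+1) := by
  have h1 : List.range' j (k-j) = j :: List.range' (j+1) (k-j-1) := by
    conv_lhs => rw [show k - j = (k-j-1)+1 from by omega]
    rw [List.range'_succ]
  rw [suf, h1]
  rw [List.map_cons, icat_cons [a] _ (by simp; omega)]
  have h2 : k - j - 1 = k - (j+1) := by omega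
  rw [h2]
  rfl

lemma suf_last (hk : 1 ≤ k) : suf a u k (k-1) = u (k-1) := by
  have h : k - (k-1) = 1 := by omega
  rw [suf, h]
  have h2 : List.range' (k-1) 1 = [k-1] := by
    rw [show (1:ℕ) = 0 + 1 from rfl, List.range'_succ]
    simp
  rw [h2, List.map_cons, List.map_nil, icat_singleton]

lemma glue (hw : w = List.intercalate [a] ((List.range k).map u)) (hk : 2 ≤ k) :
    ∀ i, 1 ≤ i → i ≤ k - 1 → w = pre a u i ++ [a] ++ suf a u k i := by
  intro i h1 h2
  induction i with
  | zero => omega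
  | succ n ih =>
    rcases Nat.eq_zero_or_pos n with rfl | hn
    · have h0 : w = suf a u k 0 := by
        rw [hw, suf]
        congr 1
        rw [Nat.sub_zero, List.range_eq_range']
      rw [h0, suf_step (by omega), pre_one]
    · have := ih (by omega) (by omega)
      rw [this, suf_step (by omega), pre_succ (by omega)]
      simp [List.append_assoc]

variable [DecidableEq α]

lemma count_pre (ha1 : ∀ j, a ∉ u j) : ∀ i, 1 ≤ i → (pre a u i).count a = i - 1 := by
  intro i h1
  induction i with
  | zero => omega
  | succ n ih =>
    rcases Nat.eq_zero_or_pos n with rfl | hn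
    · rw [pre_one]
      simp [List.count_eq_zero.2 (ha1 0)]
    · rw [pre_succ hn, List.count_append, List.count_append, ih hn]
      have e1 : (u n).count a = 0 := List.count_eq_zero.2 (ha1 n)
      have e2 : [a].count a = 1 := by simp
      omega

lemma count_w (hw : w = List.intercalate [a] ((List.range k).map u))
    (ha1 : ∀ j, a ∉ u j) (hk : 1 ≤ k) : w.count a = k - 1 := by
  have hpk : pre a u k = List.intercalate [a] ((List.range k).map u) := rfl
  rw [hw, ← hpk]
  exact count_pre ha1 k hk

lemma u0_pre : ∀ i, 1 ≤ i → ∃ E, pre a u i = u 0 ++ E := by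
  intro i h1
  induction i with
  | zero => omega
  | succ n ih =>
    rcases Nat.eq_zero_or_pos n with rfl | hn
    · exact ⟨[], by rw [pre_one]; simp⟩
    · obtain ⟨E, hE⟩ := ih hn
      exact ⟨E ++ [a] ++ u n, by rw [pre_succ hn, hE]; simp [List.append_assoc]⟩

lemma upred_suf : ∀ i, 1 ≤ i → ∃ D, pre a u i = D ++ u (i-1) := by
  intro i h1
  rcases Nat.eq_zero_or_pos (i-1) with h | h
  · refine ⟨[], ?_⟩
    have : i = 1 := by omega
    subst this
    rw [pre_one]
    simp
  · have hi : i = (i-1) + 1 := by omega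
    refine ⟨pre a u (i-1) ++ [a], ?_⟩
    conv_lhs => rw [hi]
    rw [pre_succ h]

lemma occ_a_aux {X₁ Z₁ X₂ Z₂ : List α}
    (h : X₁ ++ [a] ++ Z₁ = X₂ ++ [a] ++ Z₂)
    (hc : X₁.count a = X₂.count a) (hl : X₁.length ≤ X₂.length) : X₁ = X₂ := by
  have hp1 : X₁ ++ [a] <+: X₂ ++ [a] ++ Z₂ := ⟨Z₁, by rw [← h]⟩
  have hp2 : X₂ ++ [a] <+: X₂ ++ [a] ++ Z₂ := ⟨Z₂, rfl⟩
  have hpp : X₁ ++ [a] <+: X₂ ++ [a] :=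
    List.prefix_of_prefix_length_le hp1 hp2 (by simp; omega)
  rcases eq_or_lt_of_le hl with he | hlt
  · have := hpp.eq_of_length (by simp; omega)
    exact (List.append_inj this (by omega)).1
  · exfalso
    have hpx : X₁ ++ [a] <+: X₂ :=
      List.prefix_of_prefix_length_le hpp ⟨[a], rfl⟩ (by simp; omega)
    obtain ⟨g, hg⟩ := hpx
    have : X₂.count a = X₁.count a + 1 + g.count a := by
      rw [← hg]
      simp [List.count_append]
      omega
    omega

lemma occ_a {X₁ Z₁ X₂ Z₂ : List α}
    (h : X₁ ++ [a] ++ Z₁ = X₂ ++ [a] ++ Z₂)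
    (hc : X₁.count a = X₂.count a) : X₁ = X₂ ∧ Z₁ = Z₂ := by
  have hX : X₁ = X₂ := by
    rcases le_total X₁.length X₂.length with hl | hl
    · exact occ_a_aux h hc hl
    · exact (occ_a_aux h.symm hc.symm hl).symm
  subst hX
  refine ⟨rfl, ?_⟩
  have h2 : X₁ ++ ([a] ++ Z₁) = X₁ ++ ([a] ++ Z₂) := by
    simpa [List.append_assoc] using h
  simpa using h2

lemma hw_dec (hw : w = List.intercalate [a] ((List.range k).map u)) (hk : 3 ≤ k)
    {i : ℕ} (h1 : 1 ≤ i) (h2 : i ≤ k-2) :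
    ∃ R, w = pre a u i ++ [a] ++ u i ++ [a] ++ u (i+1) ++ R := by
  have hg := glue hw (by omega) i h1 (by omega)
  have hs1 : suf a u k i = u i ++ [a] ++ suf a u k (i+1) := suf_step (by omega)
  rcases eq_or_lt_of_le (show i + 1 ≤ k - 1 by omega) with he | hlt
  · refine ⟨[], ?_⟩
    have hs2 : suf a u k (i+1) = u (i+1) := by
      rw [show i + 1 = k - 1 from he]
      exact suf_last (by omega)
    rw [hg, hs1, hs2]
    simp [List.append_assoc]
  · refine ⟨[a] ++ suf a u k (i+2), ?_⟩
    have hs2 : suf a u k (i+1) = u (i+1) ++ [a] ++ suf a u k (i+2) :=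
      suf_step (by omega)
    rw [hg, hs1, hs2]
    simp [List.append_assoc]

lemma blockcount (hw : w = List.intercalate [a] ((List.range k).map u))
    (ha1 : ∀ j, a ∉ u j) (hk : 3 ≤ k) {X p Y : List α}
    (hW : w = X ++ [a] ++ p ++ [a] ++ Y) (hap : a ∉ p) :
    p = u (X.count a + 1) ∧ X.count a + 1 ≤ k - 2 := by
  have hcw : w.count a = k - 1 := count_w hw ha1 (by omega)
  have hcw2 : w.count a = X.count a + 2 + Y.count a := by
    rw [hW]
    have e1 : p.count a = 0 := List.count_eq_zero.2 hap
    simp [List.count_append, e1]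
    omega
  have ht2 : X.count a + 1 ≤ k - 2 := by omega
  obtain ⟨R, hR⟩ := hw_dec hw hk (show 1 ≤ X.count a + 1 by omega) ht2
  have heq : X ++ [a] ++ (p ++ [a] ++ Y)
      = pre a u (X.count a + 1) ++ [a] ++ (u (X.count a + 1) ++ [a] ++ (u (X.count a + 2) ++ R)) := by
    have l1 : X ++ [a] ++ (p ++ [a] ++ Y) = w := by rw [hW]; simp [List.append_assoc]
    have l2 : pre a u (X.count a + 1) ++ [a] ++ (u (X.count a + 1) ++ [a] ++ (u (X.count a + 2) ++ R)) = w := by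
      rw [hR]; simp [List.append_assoc]
    rw [l1, l2]
  have hcpre : (pre a u (X.count a + 1)).count a = X.count a :=
    by simpa using count_pre ha1 (X.count a + 1) (by omega)
  obtain ⟨hX, hZ⟩ := occ_a heq hcpre.symm
  obtain ⟨hp, -⟩ := fsplit hZ hap (ha1 _)
  exact ⟨hp, ht2⟩

lemma pal_block (hrich : Rich w)
    (hw : w = List.intercalate [a] ((List.range k).map u))
    (ha1 : ∀ j, a ∉ u j) (hk : 3 ≤ k)
    {t : ℕ} (h1 : 1 ≤ t) (h2 : t ≤ k-2) : Palindromic (u t) := by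
  obtain ⟨R, hR⟩ := hw_dec hw hk h1 h2
  exact consec_pal (A := pre a u t) (m := u t) (B := u (t+1) ++ R) (c := a) hrich
    (by rw [hR]; simp [List.append_assoc]) (ha1 t)

end Blocks

lemma suffix_of_cons_le {y : α} {s l : List α} (h : s <:+ [y] ++ l)
    (hl : s.length ≤ l.length) : s <:+ l := by
  obtain ⟨e, he⟩ := h
  cases e with
  | nil =>
    have := congrArg List.length he
    simp at this
    omega
  | cons z e' =>
    refine ⟨e', ?_⟩
    have : z :: (e' ++ s) = y :: l := by simpa using he
    exact (List.cons.injEq .. ▸ this).2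
    
end RichAux

open RichAux in
theorem alph_decreasing_lemma {α : Type*} [DecidableEq α] (n k : ℕ) (a₁ : α)
    (u : ℕ → List α) (w : List α)
    (hw : w = List.intercalate [a₁] ((List.range k).map u))
    (hrich : Rich w) (hsf : SqFree w)
    (hn : 3 ≤ n) (hk : 3 ≤ k)
    (halph : w.toFinset.card = n)
    (hu1 : (u 0).toFinset = w.toFinset \ {a₁})
    (ha1 : ∀ i, a₁ ∉ u i) :
    ∀ i : ℕ, 1 ≤ i → i ≤ k - 2 →
      (u i) ≠ [] ∧ Palindromic (u i) ∧ Odd (u i).length ∧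
      ∃ (v : List α) (c : α), u i = v ++ [c] ++ v.reverse ∧
        (u (i + 1)).toFinset ⊆ (u i).toFinset \ {c} := by
  set a := a₁ with ha
  intro i
  induction i using Nat.strong_induction_on with
  | _ i IH =>
  intro h1 h2
  -- basic decomposition
  obtain ⟨R, hR⟩ := hw_dec (a := a) (u := u) hw hk h1 h2
  -- u i is nonempty
  have hne : u i ≠ [] := by
    rintro hnil
    refine hsf [a] (by simp) ⟨pre a u i, u (i+1) ++ R, ?_⟩
    rw [hR, hnil]
    simp [List.append_assoc]
  -- u i is a palindrome
  have hpali : Palindromic (u i) := pal_block hrich hw ha1 hk h1 h2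
  have huiw : u i <:+: w :=
    ⟨pre a u i ++ [a], [a] ++ u (i+1) ++ R, by rw [hR]; try simp [List.append_assoc]⟩
  have hunext : u (i+1) <:+: w :=
    ⟨pre a u i ++ [a] ++ u i ++ [a], R, by rw [hR]; try simp [List.append_assoc]⟩
  -- odd length
  have hodd : Odd (u i).length := by
    by_contra hodd
    obtain ⟨d, hd⟩ := pal_even_square hpali hne hodd
    exact hsf [d] (by simp) (hd.trans huiw)
  -- center decomposition
  obtain ⟨m, hm⟩ := hodd
  obtain ⟨v, c, hvc, hvlen⟩ := pal_center hpali (m := m) (by omega)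
  have hcui : c ∈ u i := by rw [hvc]; simp
  have hca : c ≠ a := fun h => ha1 i (h ▸ hcui)
  have hav : a ∉ v := fun h => ha1 i (by rw [hvc]; simp [h])
  have havr : a ∉ v.reverse := fun h => ha1 i (by rw [hvc]; simp [List.mem_reverse.1 h])
  -- the center letter occurs only once in u i
  have hcv : c ∉ v := by
    intro hcv
    have hcvr : c ∈ v.reverse := List.mem_reverse.2 hcv
    obtain ⟨ρ, τ, hρτ, hcρ⟩ := first_split hcvr
    have hpalρ : Palindromic ρ := by
      refine consec_pal (A := pre a u i ++ [a] ++ v) (m := ρ)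
        (B := τ ++ [a] ++ u (i+1) ++ R) (c := c) hrich ?_ hcρ
      rw [hR, hvc, hρτ]
      simp [List.append_assoc]
    have hveq : v = τ.reverse ++ [c] ++ ρ.reverse := by
      have : v.reverse.reverse = (ρ ++ [c] ++ τ).reverse := congrArg List.reverse hρτ
      simpa [List.reverse_append, List.append_assoc] using this
    refine hsf ([c] ++ ρ) (by simp) ?_
    refine (List.IsInfix.trans ?_ huiw)
    refine ⟨τ.reverse, [c] ++ τ, ?_⟩
    have hρρ : ρ.reverse = ρ := hpalρ
    rw [hvc, hveq]
    simp [List.reverse_append, List.append_assoc, hρρ]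
  have hcvr : c ∉ v.reverse := fun h => hcv (List.mem_reverse.1 h)
  -- c occurs in the previous block
  have hcpred : c ∈ u (i-1) := by
    rcases Nat.eq_zero_or_pos (i-1) with h0 | hpos
    · rw [h0]
      have hcw : c ∈ w.toFinset := List.mem_toFinset.2 (huiw.mem hcui)
      have : c ∈ (u 0).toFinset := by
        rw [hu1]
        exact Finset.mem_sdiff.2 ⟨hcw, by simpa using hca⟩
      exact List.mem_toFinset.1 this
    · obtain ⟨-, -, -, v', c', hvc', hsub'⟩ := IH (i-1) (by omega) (by omega) (by omega)
      have : c ∈ (u ((i-1)+1)).toFinset := by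
        rw [show i - 1 + 1 = i by omega]
        exact List.mem_toFinset.2 hcui
      have := hsub' this
      exact List.mem_toFinset.1 (Finset.mem_sdiff.1 this).1
  -- split off the last c of u (i-1)
  obtain ⟨D, hD⟩ := upred_suf (a := a) (u := u) i h1
  obtain ⟨θ, ζ, hθζ, hcζ⟩ := last_split hcpred
  have haζ : a ∉ ζ := fun h => ha1 (i-1) (by rw [hθζ]; simp [h])
  have hpalζ : Palindromic (ζ ++ [a] ++ v) := by
    refine consec_pal (A := D ++ θ) (m := ζ ++ [a] ++ v)
      (B := v.reverse ++ [a] ++ u (i+1) ++ R) (c := c) hrich ?_ ?_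
    · rw [hR, hD, hθζ, hvc]
      simp [List.append_assoc]
    · simp only [List.mem_append, List.mem_singleton]
      rintro (⟨h | h⟩ | h)
      exacts [hcζ h, hca h, hcv h]
  have hζv : ζ = v.reverse := pal_one_a hpalζ haζ hav
  have hupred : u (i-1) = θ ++ [c] ++ v.reverse := by rw [hθζ, hζv]
  -- Claim B : c does not occur in the next block
  have hcnext : c ∉ u (i+1) := by
    intro hcc
    obtain ⟨β, δ, hβδ, hcβ⟩ := first_split hcc
    have haβ : a ∉ β := fun h => ha1 (i+1) (by rw [hβδ]; simp [h])
    have hpalm : Palindromic (v.reverse ++ [a] ++ β) := by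
      refine consec_pal (A := pre a u i ++ [a] ++ v) (m := v.reverse ++ [a] ++ β)
        (B := δ ++ R) (c := c) hrich ?_ ?_
      · rw [hR, hvc, hβδ]
        simp [List.append_assoc]
      · simp only [List.mem_append, List.mem_singleton]
        rintro (⟨h | h⟩ | h)
        exacts [hcvr h, hca h, hcβ h]
    have hβv : β = v := by
      have := pal_one_a hpalm havr haβ
      have h2 := congrArg List.reverse this
      simpa using h2.symm
    refine hsf ([c] ++ v.reverse ++ [a] ++ v) (by simp) ?_
    refine ⟨D ++ θ, [c] ++ δ ++ R, ?_⟩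
    rw [hR, hD, hupred, hvc, hβδ, hβv]
    simp [List.append_assoc]
  -- Claim A : every letter of u (i+1) occurs in u i
  have hsubA : ∀ x, x ∈ u (i+1) → x ∈ u i := by
    intro x hx
    by_contra hxui
    have hxa : x ≠ a := fun h => ha1 (i+1) (h ▸ hx)
    have hxu0 : x ∈ u 0 := by
      have hxw : x ∈ w.toFinset := List.mem_toFinset.2 (hunext.mem hx)
      have : x ∈ (u 0).toFinset := by
        rw [hu1]
        exact Finset.mem_sdiff.2 ⟨hxw, by simpa using hxa⟩
      exact List.mem_toFinset.1 this
    obtain ⟨E, hE⟩ := u0_pre (a := a) (u := u) i h1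
    have hxpre : x ∈ pre a u i := by rw [hE]; simp [hxu0]
    obtain ⟨A, m₀, hAm, hxm₀⟩ := last_split hxpre
    obtain ⟨β, δ, hβδ, hxβ⟩ := first_split hx
    have haβ : a ∉ β := fun h => ha1 (i+1) (by rw [hβδ]; simp [h])
    have hpalμ : Palindromic (m₀ ++ [a] ++ u i ++ [a] ++ β) := by
      refine consec_pal (A := A) (m := m₀ ++ [a] ++ u i ++ [a] ++ β)
        (B := δ ++ R) (c := x) hrich ?_ ?_
      · rw [hR, hAm, hβδ]
        simp [List.append_assoc]
      · simp only [List.mem_append, List.mem_singleton]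
        rintro (⟨⟨⟨h | h⟩ | h⟩ | h⟩ | h)
        exacts [hxm₀ h, hxa h, hxui h, hxa h, hxβ h]
    by_cases ham : a ∈ m₀
    · -- the previous x is further back
      have hige2 : 2 ≤ i := by
        by_contra hi2
        have hi1 : i = 1 := by omega
        have : pre a u i = u 0 := by rw [hi1, pre_one]
        rw [this] at hAm
        exact ha1 0 (by rw [hAm]; simp [ham])
      obtain ⟨m₁, m₂, hm₁₂, ham₁⟩ := first_split ham
      have hμeq : m₁ ++ [a] ++ (m₂ ++ [a] ++ u i ++ [a] ++ β)
          = β.reverse ++ [a] ++ ((u i).reverse ++ [a] ++ (m₂.reverse ++ [a] ++ m₁.reverse)) := by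
        have h2 : (m₀ ++ [a] ++ u i ++ [a] ++ β).reverse = m₀ ++ [a] ++ u i ++ [a] ++ β := hpalμ
        calc m₁ ++ [a] ++ (m₂ ++ [a] ++ u i ++ [a] ++ β)
            = m₀ ++ [a] ++ u i ++ [a] ++ β := by rw [hm₁₂]; simp [List.append_assoc]
          _ = (m₀ ++ [a] ++ u i ++ [a] ++ β).reverse := h2.symm
          _ = β.reverse ++ [a] ++ ((u i).reverse ++ [a] ++ (m₂.reverse ++ [a] ++ m₁.reverse)) := by
              rw [hm₁₂]
              simp [List.reverse_append, List.append_assoc]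
      obtain ⟨hm₁β, hstar⟩ := fsplit hμeq ham₁ (by simpa using haβ)
      by_cases ham₂ : a ∈ m₂
      · -- the mirrored block is at least two a's before u i : alphabet chain contradiction
        obtain ⟨p, r, hpr, hap⟩ := first_split ham₂
        have hstar2 : p ++ [a] ++ (r ++ [a] ++ u i ++ [a] ++ β)
            = (u i).reverse ++ [a] ++ (m₂.reverse ++ [a] ++ m₁.reverse) := by
          calc p ++ [a] ++ (r ++ [a] ++ u i ++ [a] ++ β)
              = m₂ ++ [a] ++ (u i ++ [a] ++ β) := by rw [hpr]; simp [List.append_assoc]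
            _ = (u i).reverse ++ [a] ++ (m₂.reverse ++ [a] ++ m₁.reverse) := by
                have := hstar; simpa [List.append_assoc] using this
        obtain ⟨hpui, -⟩ := fsplit hstar2 hap (by simp [ha1 i])
        -- p = (u i).reverse is a full block u t with t ≤ i - 2
        have hwp : w = (A ++ [x] ++ m₁) ++ [a] ++ p ++ [a]
            ++ (r ++ [a] ++ u i ++ [a] ++ (β ++ [x] ++ δ) ++ R) := by
          rw [hR, hAm, hm₁₂, hpr, hβδ]
          simp [List.append_assoc]
        obtain ⟨hpu, htk⟩ := blockcount hw ha1 hk hwp hap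
        set t := ((A ++ [x] ++ m₁).count a + 1) with hts
        have ht1 : 1 ≤ t := by omega
        have hcnt : (pre a u i).count a = i - 1 := count_pre ha1 i h1
        have hxcnt : [x].count a = 0 := by
          rw [List.count_eq_zero]
          simp only [List.mem_singleton]
          exact fun h => hxa h.symm
        have hm₁cnt : m₁.count a = 0 := List.count_eq_zero.2 ham₁
        have hpcnt : p.count a = 0 := List.count_eq_zero.2 hap
        have hAeq : A.count a + 2 + r.count a = i - 1 := by
          have e1 := hcnt
          rw [hAm, hm₁₂, hpr] at e1
          simp only [List.count_append, hxcnt, hm₁cnt, hpcnt] at e1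
          simp at e1
          omega
        have htle : t ≤ i - 2 := by
          have hAc : (A ++ [x] ++ m₁).count a = A.count a := by
            simp only [List.count_append, hxcnt, hm₁cnt]
            omega
          omega
        -- u t equals u i
        have hpalt : Palindromic (u t) := pal_block hrich hw ha1 hk ht1 htk
        have hut : u t = u i := by
          have h3 : u t = (u i).reverse := by rw [← hpu, hpui]
          have h5 : (u t).reverse = u i := by rw [h3, List.reverse_reverse]
          rw [← h5, hpalt]
        -- alphabet chain gives a contradiction
        have hchain : ∀ d j, j + d = i → t ≤ j → (u i).toFinset ⊆ (u j).toFinset := by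
          intro d
          induction d with
          | zero => intro j hj _; rw [show j = i by omega]
          | succ d ihd =>
            intro j hj htj
            obtain ⟨-, -, -, v', c', hvc', hsub'⟩ := IH j (by omega) (by omega) (by omega)
            refine subset_trans (ihd (j+1) (by omega) (by omega)) ?_
            exact subset_trans hsub' (Finset.sdiff_subset)
          
        obtain ⟨-, -, -, vt, ct, hvt, hsubt⟩ := IH t (by omega) (by omega) (by omega)
        have hct : ct ∈ (u t).toFinset := by rw [hvt]; simp
        have hcti : ct ∈ (u i).toFinset := by rw [← hut]; exact hct
        have := hsubt (hchain (i - (t+1)) (t+1) (by omega) (by omega) hcti)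
        rw [hut] at this
        exact (Finset.mem_sdiff.1 this).2 (Finset.mem_singleton_self ct)
      · -- the previous x is in block i-2 : direct square
        obtain ⟨hm₂, -⟩ := fsplit (by simpa [List.append_assoc] using hstar) ham₂
          (by simp [ha1 i])
        have hprei : pre a u i = pre a u (i-1) ++ [a] ++ u (i-1) := by
          conv_lhs => rw [show i = (i-1)+1 by omega]
          exact pre_succ (by omega)
        have halign : (A ++ [x] ++ m₁) ++ [a] ++ m₂ = pre a u (i-1) ++ [a] ++ u (i-1) := by
          rw [← hprei, hAm, hm₁₂]
          simp [List.append_assoc]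
        obtain ⟨hAe, hm₂u⟩ := lsplit halign ham₂ (ha1 (i-1))
        have hpalpred : Palindromic (u (i-1)) :=
          pal_block hrich hw ha1 hk (by omega) (by omega)
        have huu : u (i-1) = u i := by
          have h3 : u (i-1) = (u i).reverse := by rw [← hm₂u, hm₂]
          have h5 : (u (i-1)).reverse = u i := by rw [h3, List.reverse_reverse]
          rw [← h5, hpalpred]
        refine hsf ([a] ++ u i) (by simp) ?_
        refine ⟨pre a u (i-1), [a] ++ u (i+1) ++ R, ?_⟩
        rw [hR, hprei, huu]
        simp [List.append_assoc]
    · -- the previous x is in block i-1 : compare the two suffixes of u (i-1)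
      have hm₀β : m₀ = β.reverse := by
        have hμeq : m₀ ++ [a] ++ (u i ++ [a] ++ β)
            = β.reverse ++ [a] ++ ((u i).reverse ++ [a] ++ m₀.reverse) := by
          have h2 : (m₀ ++ [a] ++ u i ++ [a] ++ β).reverse = m₀ ++ [a] ++ u i ++ [a] ++ β := hpalμ
          calc m₀ ++ [a] ++ (u i ++ [a] ++ β)
              = m₀ ++ [a] ++ u i ++ [a] ++ β := by simp [List.append_assoc]
            _ = (m₀ ++ [a] ++ u i ++ [a] ++ β).reverse := h2.symm
            _ = β.reverse ++ [a] ++ ((u i).reverse ++ [a] ++ m₀.reverse) := by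
                simp [List.reverse_append, List.append_assoc]
        exact (fsplit hμeq ham (by simpa using haβ)).1
      -- u (i-1) ends with [x] ++ m₀
      have hux : ∃ θ₂, u (i-1) = θ₂ ++ [x] ++ m₀ := by
        rcases Nat.eq_zero_or_pos (i-1) with h0 | hpos
        · have hi1 : i = 1 := by omega
          rw [hi1] at hAm
          rw [pre_one] at hAm
          exact ⟨A, by rw [h0]; exact hAm⟩
        · have hprei : pre a u i = pre a u (i-1) ++ [a] ++ u (i-1) := by
            conv_lhs => rw [show i = (i-1)+1 by omega]
            exact pre_succ (by omega)
          have hs₁ : ([x] ++ m₀) <:+ pre a u i := ⟨A, by rw [hAm]; simp [List.append_assoc]⟩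
          have hs₂ : u (i-1) <:+ pre a u i := ⟨pre a u (i-1) ++ [a], by rw [hprei]⟩
          have hs₃ : ([a] ++ u (i-1)) <:+ pre a u i :=
            ⟨pre a u (i-1), by rw [hprei]; simp [List.append_assoc]⟩
          rcases lt_trichotomy m₀.length (u (i-1)).length with hlt | heq | hgt
          · have h5 : ([x] ++ m₀) <:+ u (i-1) :=
              suffix_of_suffix_le hs₁ hs₂ (by simp; omega)
            obtain ⟨θ₂, hθ₂⟩ := h5
            exact ⟨θ₂, by rw [← hθ₂]; simp [List.append_assoc]⟩
          · exfalso
            have h5 : [x] ++ m₀ = [a] ++ u (i-1) :=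
              suffix_eq_of_len hs₁ hs₃ (by simp; omega)
            exact hxa (by simpa using congrArg (fun l => l.head?) h5)
          · exfalso
            have h5 : ([a] ++ u (i-1)) <:+ ([x] ++ m₀) :=
              suffix_of_suffix_le hs₃ hs₁ (by simp; omega)
            have h6 : ([a] ++ u (i-1)) <:+ m₀ :=
              suffix_of_cons_le h5 (by simp; omega)
            obtain ⟨e, he⟩ := h6
            exact ham (by rw [← he]; simp)
      obtain ⟨θ₂, hθ₂⟩ := hux
      -- compare with u (i-1) = θ ++ [c] ++ v.reverse
      have hsx : ([x] ++ m₀) <:+ u (i-1) := ⟨θ₂, by rw [hθ₂]; simp [List.append_assoc]⟩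
      have hsc : ([c] ++ v.reverse) <:+ u (i-1) := ⟨θ, by rw [hupred]; simp [List.append_assoc]⟩
      rcases lt_trichotomy m₀.length v.reverse.length with hlt | heq | hgt
      · have h5 : ([x] ++ m₀) <:+ ([c] ++ v.reverse) :=
          suffix_of_suffix_le hsx hsc (by simp at hlt ⊢; omega)
        have h6 : ([x] ++ m₀) <:+ v.reverse :=
          suffix_of_cons_le h5 (by simp at hlt ⊢; omega)
        obtain ⟨e, he⟩ := h6
        have : x ∈ v.reverse := by rw [← he]; simp
        exact hxui (by rw [hvc]; simp [this])
      · have h5 : [x] ++ m₀ = [c] ++ v.reverse :=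
          suffix_eq_of_len hsx hsc (by simp at heq ⊢; omega)
        have : x = c := by simpa using congrArg (fun l => l.head?) h5
        exact hxui (this ▸ hcui)
      · have h5 : ([c] ++ v.reverse) <:+ ([x] ++ m₀) :=
          suffix_of_suffix_le hsc hsx (by simp at hgt ⊢; omega)
        have h6 : ([c] ++ v.reverse) <:+ m₀ :=
          suffix_of_cons_le h5 (by simp at hgt ⊢; omega)
        obtain ⟨e, he⟩ := h6
        have hcm₀ : c ∈ m₀ := by rw [← he]; simp
        have : c ∈ β := by
          rw [hm₀β] at hcm₀
          exact List.mem_reverse.1 hcm₀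
        exact hcnext (by rw [hβδ]; simp [this])
  -- assemble the conclusion
  refine ⟨hne, hpali, ⟨m, hm⟩, v, c, hvc, ?_⟩
  intro y hy
  have hyu : y ∈ u (i+1) := List.mem_toFinset.1 hy
  refine Finset.mem_sdiff.2 ⟨List.mem_toFinset.2 (hsubA y hyu), ?_⟩
  simp only [Finset.mem_singleton]
  intro hyc
  exact hcnext (hyc ▸ hyu)
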